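/- Let m, n, w_1, w_2, d be natural numbers with 1 ≤ w_1, w_1 ∣ w_2, w_2 ∣ m, and w_1 ∣ n·w_2. Then (Nat.choose m w_2)^n · A((m/w_2)·w_1, n·w_2/w_1, w_1, d) ≥ (Nat.choose ((m/w_2)·w_1) w_1)^(n·w_2/w_1) · A(m, n, w_2, d). -/

import Mathlib

open Finset

/-- Total Hamming distance between two words in `J(m,w)^n`:
the number of positions (among all `m·n` entries) in which they differ. -/
def arrDist {m n : ℕ} (X Y : Fin n → Fin m → ZMod 2) : ℕ :=
  ∑ k, hammingDist (X k) (Y k)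

/-- `C` is a constant-weight array code in `J(m,w)^n` with minimum distance `2d`. -/
def isCWAC (m n w d : ℕ) (C : Finset (Fin n → Fin m → ZMod 2)) : Prop :=
  C.Nonempty ∧ (∀ X ∈ C, ∀ k, hammingNorm (X k) = w) ∧
    ∀ X ∈ C, ∀ Y ∈ C, X ≠ Y → 2 * d ≤ arrDist X Y

/-- Maximum cardinality of a CWAC in `J(m,w)^n` with minimum Hamming distance `2d`. -/
noncomputable def Amax (m n w d : ℕ) : ℕ :=
  sSup { c | ∃ C : Finset (Fin n → Fin m → ZMod 2), isCWAC m n w d C ∧ C.card = c }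

/-- Maximum cardinality of an anticode in `J(m,w)^n` with diameter `2δ`. -/
noncomputable def alphaMax (m n w δ : ℕ) : ℕ :=
  sSup { c | ∃ C : Finset (Fin n → Fin m → ZMod 2), C.Nonempty ∧
    (∀ X ∈ C, ∀ k, hammingNorm (X k) = w) ∧
    (∀ X ∈ C, ∀ Y ∈ C, arrDist X Y ≤ 2 * δ) ∧ C.card = c }

/-- Maximum cardinality of a binary constant-weight code in `J(n,w)` with
minimum Hamming distance `2d`. -/
noncomputable def Bmax (n w d : ℕ) : ℕ :=
  sSup { c | ∃ C : Finset (Fin n → ZMod 2), C.Nonempty ∧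
    (∀ x ∈ C, hammingNorm x = w) ∧
    (∀ x ∈ C, ∀ y ∈ C, x ≠ y → 2 * d ≤ hammingDist x y) ∧ C.card = c }

/-- Maximum cardinality of a nonrestricted `q`-ary code of length `n` with
minimum Hamming distance `d`. -/
noncomputable def Cmax (q n d : ℕ) : ℕ :=
  sSup { c | ∃ C : Finset (Fin n → Fin q), C.Nonempty ∧
    (∀ x ∈ C, ∀ y ∈ C, x ≠ y → d ≤ hammingDist x y) ∧ C.card = c }

/-- `ν(i)`: the number of vectors of weight `u` at Hamming distance `i` from a
fixed vector of weight `w` in `GF(2)^m`. -/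
def nuF (m w u : ℕ) (i : ℕ) : ℕ :=
  if (u + w - i) % 2 = 0 ∧ i ≤ u + w ∧ w ≤ u + i then
    Nat.choose w ((u + w - i) / 2) * Nat.choose (m - w) ((u + i - w) / 2)
  else 0


section beAux

variable {α β : Type*} [Fintype α] [Fintype β] [DecidableEq α] [DecidableEq β]

lemma aux_exists_equiv (e0 : α ≃ β) (T : Finset α) (s : Finset β) (h : T.card = s.card) :
    ∃ g : α ≃ β, ∀ x, g x ∈ s ↔ x ∈ T := by
  classical
  have hc : Fintype.card α = Fintype.card β := Fintype.card_congr e0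
  have h1 : (Tᶜ : Finset α).card = (sᶜ : Finset β).card := by
    rw [Finset.card_compl, Finset.card_compl, h, hc]
  let e1 : {x // x ∈ T} ≃ {x // x ∈ s} := Finset.equivOfCardEq h
  let e2 : {x // ¬ x ∈ T} ≃ {x // ¬ x ∈ s} :=
    (Equiv.subtypeEquivRight (fun x => (Finset.mem_compl (s := T)).symm)).trans
      ((Finset.equivOfCardEq h1).trans (Equiv.subtypeEquivRight (fun x => Finset.mem_compl)))
  refine ⟨(Equiv.sumCompl (· ∈ T)).symm.trans ((e1.sumCongr e2).trans (Equiv.sumCompl (· ∈ s))),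
    fun x => ?_⟩
  by_cases hx : x ∈ T
  · have : (Equiv.sumCompl (· ∈ T)).symm x = Sum.inl ⟨x, hx⟩ := by
      simp [hx]
    simp only [Equiv.trans_apply, this, Equiv.sumCongr_apply, Sum.map_inl, Equiv.sumCompl_apply_inl]
    exact iff_of_true (e1 ⟨x, hx⟩).2 hx
  · have : (Equiv.sumCompl (· ∈ T)).symm x = Sum.inr ⟨x, hx⟩ := by
      simp [hx]
    simp only [Equiv.trans_apply, this, Equiv.sumCongr_apply, Sum.map_inr, Equiv.sumCompl_apply_inr]
    exact iff_of_false (e2 ⟨x, hx⟩).2 hx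

section col
variable {J M : Type*} [Fintype J] [Fintype M] [DecidableEq J] [DecidableEq M]

lemma column_count (e0 : J × M ≃ α) (s₀ : Finset α) (w₁ : ℕ)
    (hs : s₀.card = Fintype.card J * w₁) :
    (univ.filter (fun τ : (J × M) ≃ α =>
        ∀ j : J, (univ.filter fun i : M => τ (j,i) ∈ s₀).card = w₁)).card
        * (Fintype.card α).choose s₀.card
      = (Fintype.card M).choose w₁ ^ (Fintype.card J) * (Fintype.card α).factorial := by
  classical
  have hc : Fintype.card (J × M) = Fintype.card α := Fintype.card_congr e0
  set fibmap : ((J × M) ≃ α) → Finset (J × M) :=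
    fun τ => univ.filter (fun b => τ b ∈ s₀) with hfibmap
  -- Step A : card of fibmap τ
  have stepA : ∀ τ : (J × M) ≃ α, (fibmap τ).card = s₀.card := by
    intro τ
    refine Finset.card_bij' (fun b _ => τ b) (fun a _ => τ.symm a) ?_ ?_ ?_ ?_
    · intro b hb; simpa [hfibmap] using hb
    · intro a ha; simp [hfibmap, ha]
    · intro b _; simp
    · intro a _; simp
  set fib : Finset (J × M) → ℕ :=
    fun T => (univ.filter (fun τ : (J × M) ≃ α => fibmap τ = T)).card with hfib
  have hmemfib : ∀ (τ : (J × M) ≃ α) (T : Finset (J × M)),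
      fibmap τ = T ↔ ∀ b, τ b ∈ s₀ ↔ b ∈ T := by
    intro τ T
    constructor
    · intro h b; rw [← h]; simp [hfibmap]
    · intro h; ext b; simp [hfibmap, h b]
  -- Step B : constancy of fib
  have stepB : ∀ T T' : Finset (J × M), T.card = T'.card → fib T = fib T' := by
    intro T T' hTT
    obtain ⟨g, hg⟩ := aux_exists_equiv (Equiv.refl (J × M)) T' T hTT.symm
    refine Finset.card_bij' (fun τ _ => g.trans τ) (fun τ _ => g.symm.trans τ) ?_ ?_ ?_ ?_
    · intro τ hτ
      simp only [mem_filter, mem_univ, true_and] at hτ ⊢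
      rw [hmemfib] at hτ ⊢
      intro b
      rw [Equiv.trans_apply, hτ (g b), hg b]
    · intro τ hτ
      simp only [mem_filter, mem_univ, true_and] at hτ ⊢
      rw [hmemfib] at hτ ⊢
      intro b
      rw [Equiv.trans_apply, hτ (g.symm b), ← hg (g.symm b), Equiv.apply_symm_apply]
    · intro τ _; ext b; simp
    · intro τ _; ext b; simp
  -- the big sets
  set P : Finset (Finset (J × M)) := powersetCard s₀.card univ with hP
  set Good : Finset (Finset (J × M)) := univ.filter
    (fun T : Finset (J × M) => ∀ j : J, (univ.filter fun i : M => (j,i) ∈ T).card = w₁)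
    with hGood
  have hGoodcard : ∀ T ∈ Good, T.card = s₀.card := by
    intro T hT
    simp only [hGood, mem_filter, mem_univ, true_and] at hT
    have : T.card = ∑ j : J, (T.filter (fun b => b.1 = j)).card :=
      Finset.card_eq_sum_card_fiberwise (fun b _ => mem_univ _)
    rw [this, hs]
    have hj : ∀ j : J, (T.filter (fun b => b.1 = j)).card
        = (univ.filter fun i : M => (j,i) ∈ T).card := by
      intro j
      refine Finset.card_bij' (fun b _ => b.2) (fun i _ => (j, i)) ?_ ?_ ?_ ?_
      · intro b hb
        simp only [mem_filter, mem_univ, true_and] at hb ⊢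
        rcases hb with ⟨h1, h2⟩
        rwa [← h2]
      · intro i hi
        simp only [mem_filter, mem_univ, true_and] at hi
        exact mem_filter.mpr ⟨hi, rfl⟩
      · intro b hb
        simp only [mem_filter] at hb
        exact Prod.ext hb.2.symm rfl
      · intro i _; rfl
    calc ∑ j : J, (T.filter (fun b => b.1 = j)).card
        = ∑ j : J, w₁ := by
          refine Finset.sum_congr rfl fun j _ => ?_
          rw [hj j, hT j]
      _ = Fintype.card J * w₁ := by
          rw [Finset.sum_const, card_univ, smul_eq_mul]
  -- Step C : total count
  have stepC : (Fintype.card α).factorial = ∑ T ∈ P, fib T := by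
    have h1 : (univ : Finset ((J × M) ≃ α)).card = ∑ T ∈ P, fib T := by
      refine Finset.card_eq_sum_card_fiberwise (f := fibmap) ?_
      intro τ _
      rw [hP, Finset.mem_coe, Finset.mem_powersetCard_univ]
      exact stepA τ
    rw [← h1, card_univ, Fintype.card_equiv e0, hc]
  -- Step D : good count
  have stepD : (univ.filter (fun τ : (J × M) ≃ α =>
      ∀ j : J, (univ.filter fun i : M => τ (j,i) ∈ s₀).card = w₁)).card
      = ∑ T ∈ Good, fib T := by
    have h1 : (univ.filter (fun τ : (J × M) ≃ α =>
        ∀ j : J, (univ.filter fun i : M => τ (j,i) ∈ s₀).card = w₁)).card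
        = ∑ T ∈ Good, ((univ.filter (fun τ : (J × M) ≃ α =>
            ∀ j : J, (univ.filter fun i : M => τ (j,i) ∈ s₀).card = w₁)).filter
              (fun τ => fibmap τ = T)).card := by
      refine Finset.card_eq_sum_card_fiberwise (f := fibmap) ?_
      intro τ hτ
      simp only [Finset.mem_coe, mem_filter, mem_univ, true_and] at hτ
      rw [hGood, Finset.mem_coe, mem_filter]
      refine ⟨mem_univ _, fun j => ?_⟩
      rw [← hτ j]
      congr 1
      ext i
      simp [hfibmap]
    rw [h1]
    refine Finset.sum_congr rfl fun T hT => ?_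
    congr 1
    rw [Finset.filter_filter]
    refine Finset.filter_congr fun τ _ => ?_
    simp only [hGood, mem_filter, mem_univ, true_and] at hT
    constructor
    · intro h; exact h.2
    · intro h
      refine ⟨fun j => ?_, h⟩
      rw [← hT j]
      congr 1
      ext i
      simp only [mem_filter, mem_univ, true_and]
      rw [(hmemfib τ T).1 h (j, i)]
  -- Step E : size of Good
  have stepE : Good.card = (Fintype.card M).choose w₁ ^ (Fintype.card J) := by
    have : Good.card = (Fintype.piFinset
        (fun _ : J => powersetCard w₁ (univ : Finset M))).card := by
      refine Finset.card_bij' (fun T _ => fun j => univ.filter (fun i : M => (j, i) ∈ T))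
        (fun F _ => univ.filter (fun b : J × M => b.2 ∈ F b.1)) ?_ ?_ ?_ ?_
      · intro T hT
        simp only [hGood, mem_filter, mem_univ, true_and] at hT
        rw [Fintype.mem_piFinset]
        intro j
        rw [Finset.mem_powersetCard_univ]
        exact hT j
      · intro F hF
        rw [Fintype.mem_piFinset] at hF
        simp only [hGood, mem_filter, mem_univ, true_and]
        intro j
        have h2 := hF j
        rw [Finset.mem_powersetCard_univ] at h2
        rw [Finset.filter_univ_mem]
        exact h2
      · intro T _
        ext b
        simp
      · intro F _
        funext j
        ext i
        simp
    rw [this, Fintype.card_piFinset]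
    simp [Finset.card_powersetCard]
  -- combine
  have key : (∑ T ∈ Good, fib T) * P.card = Good.card * ∑ T ∈ P, fib T := by
    have hGP : ∀ T ∈ Good, ∀ T' ∈ P, fib T' = fib T := by
      intro T hT T' hT'
      refine stepB T' T ?_
      rw [hGoodcard T hT]
      rw [hP, Finset.mem_powersetCard_univ] at hT'
      exact hT'
    calc (∑ T ∈ Good, fib T) * P.card = ∑ T ∈ Good, (fib T * P.card) := by
          rw [Finset.sum_mul]
      _ = ∑ T ∈ Good, ∑ T' ∈ P, fib T' := by
          refine Finset.sum_congr rfl fun T hT => ?_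
          rw [Finset.sum_congr rfl (fun T' hT' => hGP T hT T' hT'), Finset.sum_const, smul_eq_mul,
            mul_comm]
      _ = Good.card * ∑ T ∈ P, fib T := by
          rw [Finset.sum_const, smul_eq_mul]
  have hPcard : P.card = (Fintype.card α).choose s₀.card := by
    rw [hP, Finset.card_powersetCard, card_univ, hc]
  rw [stepD, ← hPcard, key, stepE, ← stepC]
end col


lemma amax_bdd (m n w d : ℕ) :
    BddAbove { c | ∃ C : Finset (Fin n → Fin m → ZMod 2), isCWAC m n w d C ∧ C.card = c } := by
  refine ⟨Fintype.card (Fin n → Fin m → ZMod 2), fun c hc => ?_⟩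
  obtain ⟨C, _, rfl⟩ := hc
  exact le_trans (Finset.card_le_univ C) (le_of_eq Finset.card_univ)

lemma le_Amax {m n w d : ℕ} {C : Finset (Fin n → Fin m → ZMod 2)} (h : isCWAC m n w d C) :
    C.card ≤ Amax m n w d := le_csSup (amax_bdd m n w d) ⟨C, h, rfl⟩

lemma arrDist_eq_sum {m n : ℕ} (X Y : Fin n → Fin m → ZMod 2) :
    arrDist X Y = ∑ q : Fin n × Fin m, if X q.1 q.2 ≠ Y q.1 q.2 then 1 else 0 := by
  rw [Fintype.sum_prod_type, arrDist]
  refine Finset.sum_congr rfl fun k _ => ?_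
  simp [hammingDist, Finset.card_filter]

lemma arrDist_eq_zero_iff {m n : ℕ} {X Y : Fin n → Fin m → ZMod 2} :
    arrDist X Y = 0 ↔ X = Y := by
  constructor
  · intro h
    funext k
    rw [arrDist, Finset.sum_eq_zero_iff] at h
    exact hammingDist_eq_zero.mp (h k (mem_univ _))
  · rintro rfl
    rw [arrDist]
    simp

section phi
variable {m n t m' n' : ℕ} (eN : Fin n' ≃ Fin n × Fin t)

/-- The rearrangement map. -/
def Phi (eN : Fin n' ≃ Fin n × Fin t) (σ : Fin n → (Fin t × Fin m' ≃ Fin m))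
    (X : Fin n → Fin m → ZMod 2) : Fin n' → Fin m' → ZMod 2 :=
  fun k' i => X (eN k').1 (σ (eN k').1 ((eN k').2, i))

def coordEquiv (eN : Fin n' ≃ Fin n × Fin t) (σ : Fin n → (Fin t × Fin m' ≃ Fin m)) :
    Fin n' × Fin m' ≃ Fin n × Fin m where
  toFun p := ((eN p.1).1, σ (eN p.1).1 ((eN p.1).2, p.2))
  invFun q := (eN.symm (q.1, ((σ q.1).symm q.2).1), ((σ q.1).symm q.2).2)
  left_inv p := by simp
  right_inv q := by simp

lemma arrDist_Phi (σ : Fin n → (Fin t × Fin m' ≃ Fin m)) (X Y : Fin n → Fin m → ZMod 2) :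
    arrDist (Phi eN σ X) (Phi eN σ Y) = arrDist X Y := by
  rw [arrDist_eq_sum, arrDist_eq_sum]
  rw [← Equiv.sum_comp (coordEquiv eN σ)
    (fun q : Fin n × Fin m => if X q.1 q.2 ≠ Y q.1 q.2 then (1:ℕ) else 0)]
  rfl

lemma Phi_inj (σ : Fin n → (Fin t × Fin m' ≃ Fin m)) {X Y : Fin n → Fin m → ZMod 2}
    (h : Phi eN σ X = Phi eN σ Y) : X = Y := by
  rw [← arrDist_eq_zero_iff, ← arrDist_Phi eN σ, arrDist_eq_zero_iff]
  exact h
end phi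

end beAux

theorem bassalygo_elias_CWAC (m n w₁ w₂ d : ℕ)
    (hw1 : 1 ≤ w₁) (h12 : w₁ ∣ w₂) (h2m : w₂ ∣ m) (h1n : w₁ ∣ n * w₂) :
    (Nat.choose ((m / w₂) * w₁) w₁) ^ (n * w₂ / w₁) * Amax m n w₂ d
      ≤ (Nat.choose m w₂) ^ n * Amax ((m / w₂) * w₁) (n * w₂ / w₁) w₁ d := by
  classical
  set t := w₂ / w₁ with ht
  set m' := (m / w₂) * w₁ with hm'
  set n' := n * w₂ / w₁ with hn'
  have htw : t * w₁ = w₂ := Nat.div_mul_cancel h12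
  have htm : t * m' = m := by
    rw [hm', ht]
    calc w₂ / w₁ * (m / w₂ * w₁) = (w₂ / w₁ * w₁) * (m / w₂) := by ring
      _ = w₂ * (m / w₂) := by rw [Nat.div_mul_cancel h12]
      _ = m := Nat.mul_div_cancel' h2m
  have hnt : n' = n * t := by rw [hn', ht, Nat.mul_div_assoc n h12]
  rcases Set.eq_empty_or_nonempty
      { c | ∃ C : Finset (Fin n → Fin m → ZMod 2), isCWAC m n w₂ d C ∧ C.card = c } with hS | hS
  · rw [Amax, hS, csSup_empty]
    simp
  obtain ⟨C, hC, hCcard⟩ :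
      ∃ C : Finset (Fin n → Fin m → ZMod 2), isCWAC m n w₂ d C ∧ C.card = Amax m n w₂ d :=
    Nat.sSup_mem hS (amax_bdd m n w₂ d)
  let eN : Fin n' ≃ Fin n × Fin t := (finCongr hnt).trans finProdFinEquiv.symm
  let e0 : Fin t × Fin m' ≃ Fin m := finProdFinEquiv.trans (finCongr htm)
  set E := Fin n → (Fin t × Fin m' ≃ Fin m) with hE
  -- step 1 : each section code is small
  have step1 : ∀ σ : E,
      (C.filter (fun X => ∀ k', hammingNorm (Phi eN σ X k') = w₁)).card ≤ Amax m' n' w₁ d := by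
    intro σ
    set D := C.filter (fun X => ∀ k', hammingNorm (Phi eN σ X k') = w₁) with hD
    rcases D.eq_empty_or_nonempty with h | h
    · simp [h]
    refine le_trans (le_of_eq ?_) (le_Amax (C := D.image (Phi eN σ)) ?_)
    · exact (Finset.card_image_of_injOn (fun X _ Y _ hxy => Phi_inj eN σ hxy)).symm
    · refine ⟨h.image _, ?_, ?_⟩
      · intro Z hZ k'
        obtain ⟨X, hX, rfl⟩ := Finset.mem_image.mp hZ
        exact (Finset.mem_filter.mp hX).2 k'
      · intro Z hZ Z' hZ' hne
        obtain ⟨X, hX, rfl⟩ := Finset.mem_image.mp hZ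
        obtain ⟨Y, hY, rfl⟩ := Finset.mem_image.mp hZ'
        have hXY : X ≠ Y := fun hxy => hne (by rw [hxy])
        rw [arrDist_Phi]
        exact hC.2.2 X (Finset.mem_filter.mp hX).1 Y (Finset.mem_filter.mp hY).1 hXY
  -- column counts
  set Nk : (Fin n → Fin m → ZMod 2) → Fin n → ℕ := fun X k =>
    (univ.filter (fun τ : (Fin t × Fin m') ≃ Fin m =>
      ∀ j, (univ.filter fun i => X k (τ (j,i)) ≠ 0).card = w₁)).card with hNk
  have colId : ∀ X ∈ C, ∀ k, Nk X k * m.choose w₂ = m'.choose w₁ ^ t * m.factorial := by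
    intro X hX k
    have hs : (univ.filter fun x : Fin m => X k x ≠ 0).card = Fintype.card (Fin t) * w₁ := by
      rw [Fintype.card_fin]
      have h0 : (univ.filter fun x : Fin m => X k x ≠ 0).card = hammingNorm (X k) := rfl
      rw [h0, hC.2.1 X hX k, ← htw]
    have hcol := column_count e0 (univ.filter fun x : Fin m => X k x ≠ 0) w₁ hs
    simp only [Fintype.card_fin] at hcol hs
    rw [hs, htw] at hcol
    rw [← hcol]
    congr 1
    simp only [hNk]
    congr 1
    ext τ
    simp
  -- per-X count of good σ
  have stepX : ∀ X, (univ.filter (fun σ : E =>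
      ∀ k', hammingNorm (Phi eN σ X k') = w₁)).card = ∏ k, Nk X k := by
    intro X
    have hiff : ∀ σ : E, (∀ k', hammingNorm (Phi eN σ X k') = w₁) ↔
        ∀ k, σ k ∈ (univ.filter (fun τ : (Fin t × Fin m') ≃ Fin m =>
          ∀ j, (univ.filter fun i : Fin m' => X k (τ (j,i)) ≠ 0).card = w₁)) := by
      intro σ
      constructor
      · intro h k
        simp only [mem_filter, mem_univ, true_and]
        intro j
        have h2 := h (eN.symm (k, j))
        simpa [Phi, hammingNorm] using h2
      · intro h k'
        have h2 := h (eN k').1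
        simp only [mem_filter, mem_univ, true_and] at h2
        have h3 := h2 (eN k').2
        simp only [Phi, hammingNorm]
        convert h3
        ext i; rw [Finset.mem_filter]; exact ⟨fun h => ⟨Finset.mem_univ _, (Finset.mem_filter.mp h).2⟩, fun h => Finset.mem_filter.mpr ⟨Finset.mem_univ _, h.2⟩⟩
    have hset : (univ.filter (fun σ : E => ∀ k', hammingNorm (Phi eN σ X k') = w₁))
        = Fintype.piFinset (fun k => (univ.filter (fun τ : (Fin t × Fin m') ≃ Fin m =>
          ∀ j, (univ.filter fun i : Fin m' => X k (τ (j,i)) ≠ 0).card = w₁))) := by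
      ext σ
      rw [Fintype.mem_piFinset, mem_filter]
      simp only [mem_univ, true_and]
      exact hiff σ
    rw [hset, Fintype.card_piFinset]
  -- exchange
  have exch : ∑ σ : E, (C.filter (fun X => ∀ k', hammingNorm (Phi eN σ X k') = w₁)).card
      = ∑ X ∈ C, (univ.filter (fun σ : E => ∀ k', hammingNorm (Phi eN σ X k') = w₁)).card := by
    simp only [Finset.card_filter]
    exact Finset.sum_comm
  have cardE : (univ : Finset E).card = m.factorial ^ n := by
    rw [Finset.card_univ]
    have h1 : Fintype.card E = Fintype.card (Fin n → Fin t × Fin m' ≃ Fin m) := rfl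
    rw [h1, Fintype.card_fun, Fintype.card_equiv e0]
    simp [htm]
  have bound : ∑ X ∈ C, ∏ k, Nk X k ≤ m.factorial ^ n * Amax m' n' w₁ d := by
    calc ∑ X ∈ C, ∏ k, Nk X k
        = ∑ σ : E, (C.filter (fun X => ∀ k', hammingNorm (Phi eN σ X k') = w₁)).card := by
          rw [exch]
          exact (Finset.sum_congr rfl fun X _ => (stepX X)).symm
      _ ≤ ∑ _σ : E, Amax m' n' w₁ d := Finset.sum_le_sum fun σ _ => step1 σ
      _ = m.factorial ^ n * Amax m' n' w₁ d := by
          rw [Finset.sum_const, smul_eq_mul, cardE]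
  have hpowid : (m'.choose w₁ ^ t * m.factorial) ^ n
      = m'.choose w₁ ^ n' * m.factorial ^ n := by
    rw [mul_pow, ← pow_mul, hnt, mul_comm t n]
  have final : (m'.choose w₁ ^ n' * Amax m n w₂ d) * m.factorial ^ n
      ≤ ((m.choose w₂) ^ n * Amax m' n' w₁ d) * m.factorial ^ n := by
    calc (m'.choose w₁ ^ n' * Amax m n w₂ d) * m.factorial ^ n
        = Amax m n w₂ d * (m'.choose w₁ ^ t * m.factorial) ^ n := by
          rw [hpowid]; ring
      _ = ∑ _X ∈ C, ∏ _k : Fin n, (m'.choose w₁ ^ t * m.factorial) := by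
          rw [Finset.prod_const, Finset.sum_const, smul_eq_mul, hCcard]
          simp
      _ = ∑ X ∈ C, ∏ k : Fin n, (Nk X k * m.choose w₂) := by
          refine Finset.sum_congr rfl fun X hX => ?_
          exact (Finset.prod_congr rfl fun k _ => colId X hX k).symm
      _ = ∑ X ∈ C, (∏ k, Nk X k) * (m.choose w₂) ^ n := by
          refine Finset.sum_congr rfl fun X _ => ?_
          rw [Finset.prod_mul_distrib, Finset.prod_const]
          simp
      _ = (∑ X ∈ C, ∏ k, Nk X k) * (m.choose w₂) ^ n := by
          rw [Finset.sum_mul]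
      _ ≤ (m.factorial ^ n * Amax m' n' w₁ d) * (m.choose w₂) ^ n :=
          Nat.mul_le_mul_right _ bound
      _ = ((m.choose w₂) ^ n * Amax m' n' w₁ d) * m.factorial ^ n := by ring
  exact Nat.le_of_mul_le_mul_right final (pow_pos (Nat.factorial_pos m) n)
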